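/- Let H be a Hopf algebra. If the identity k₁·k₃·S(k₂)=k holds for all k∈H, then k₂S(k₁)=ε(k)1 for all k∈H, and hence S²=id. -/

import Mathlib

noncomputable section
open TensorProduct

namespace YDL

variable (K : Type) [Field K] (H : Type) [Ring H] [HopfAlgebra K H]

abbrev mu : H ⊗[K] H →ₗ[K] H := LinearMap.mul' K H
abbrev cm : H →ₗ[K] H ⊗[K] H := Coalgebra.comul
abbrev cu : H →ₗ[K] K := Coalgebra.counit
abbrev sa : H →ₗ[K] H := HopfAlgebra.antipode (R := K)
abbrev eta : K →ₗ[K] H := Algebra.linearMap K H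

/-- Yetter–Drinfel'd–Long bimodule over `H` (Definition 2.1). -/
structure IsYDLong (M : Type) [AddCommGroup M] [Module K M]
    (lact : H ⊗[K] M →ₗ[K] M) (ract : M ⊗[K] H →ₗ[K] M)
    (lcoact : M →ₗ[K] H ⊗[K] M) (rcoact : M →ₗ[K] M ⊗[K] H) : Prop where
  lact_one : ∀ m : M, lact (1 ⊗ₜ m) = m
  lact_mul : ∀ (g h : H) (m : M), lact ((g * h) ⊗ₜ m) = lact (g ⊗ₜ lact (h ⊗ₜ m))
  ract_one : ∀ m : M, ract (m ⊗ₜ 1) = m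
  ract_mul : ∀ (m : M) (g h : H), ract (m ⊗ₜ (g * h)) = ract (ract (m ⊗ₜ g) ⊗ₜ h)
  bimod : ∀ (h : H) (m : M) (g : H),
    ract (lact (h ⊗ₜ m) ⊗ₜ g) = lact (h ⊗ₜ ract (m ⊗ₜ g))
  lcoassoc : (TensorProduct.assoc K H H M).toLinearMap ∘ₗ (cm K H).rTensor M ∘ₗ lcoact
      = lcoact.lTensor H ∘ₗ lcoact
  lcounit : (TensorProduct.lid K M).toLinearMap ∘ₗ (cu K H).rTensor M ∘ₗ lcoact
      = LinearMap.id
  rcoassoc : (TensorProduct.assoc K M H H).toLinearMap ∘ₗ rcoact.rTensor H ∘ₗ rcoact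
      = (cm K H).lTensor M ∘ₗ rcoact
  rcounit : (TensorProduct.rid K M).toLinearMap ∘ₗ (cu K H).lTensor M ∘ₗ rcoact
      = LinearMap.id
  bicomod : rcoact.lTensor H ∘ₗ lcoact
      = (TensorProduct.assoc K H M H).toLinearMap ∘ₗ lcoact.rTensor H ∘ₗ rcoact
  yd23 : (mu K H).rTensor M ∘ₗ (TensorProduct.comm K H H).toLinearMap.rTensor M
        ∘ₗ (TensorProduct.assoc K H H M).symm.toLinearMap ∘ₗ lcoact.lTensor H ∘ₗ lact.lTensor H
        ∘ₗ (TensorProduct.assoc K H H M).toLinearMap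
        ∘ₗ (TensorProduct.comm K H H).toLinearMap.rTensor M ∘ₗ (cm K H).rTensor M
      = TensorProduct.map (mu K H) lact
        ∘ₗ (tensorTensorTensorComm K H H H M).toLinearMap
        ∘ₗ TensorProduct.map (cm K H) lcoact
  long24 : rcoact ∘ₗ lact
      = lact.rTensor H ∘ₗ (TensorProduct.assoc K H M H).symm.toLinearMap ∘ₗ rcoact.lTensor H
  yd25 : (mu K H).lTensor M ∘ₗ (TensorProduct.comm K H H).toLinearMap.lTensor M
        ∘ₗ (TensorProduct.assoc K M H H).toLinearMap ∘ₗ rcoact.rTensor H ∘ₗ ract.rTensor H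
        ∘ₗ (TensorProduct.assoc K M H H).symm.toLinearMap
        ∘ₗ (TensorProduct.comm K H H).toLinearMap.lTensor M ∘ₗ (cm K H).lTensor M
      = TensorProduct.map ract (mu K H)
        ∘ₗ (tensorTensorTensorComm K M H H H).toLinearMap
        ∘ₗ TensorProduct.map rcoact (cm K H)
  long26 : lcoact ∘ₗ ract
      = ract.lTensor H ∘ₗ (TensorProduct.assoc K H M H).toLinearMap ∘ₗ lcoact.rTensor H

/-- The braiding `ψ_{M,N}(m ⊗ n) = m₍₋₁₎ ▷ n₍₀₎ ⊗ m₍₀₎ ◁ n₍₁₎`. -/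
def braid {M N : Type} [AddCommGroup M] [Module K M] [AddCommGroup N] [Module K N]
    (lcoactM : M →ₗ[K] H ⊗[K] M) (ractM : M ⊗[K] H →ₗ[K] M)
    (lactN : H ⊗[K] N →ₗ[K] N) (rcoactN : N →ₗ[K] N ⊗[K] H) :
    M ⊗[K] N →ₗ[K] N ⊗[K] M :=
  TensorProduct.map lactN ractM ∘ₗ (tensorTensorTensorComm K H M N H).toLinearMap
    ∘ₗ TensorProduct.map lcoactM rcoactN

/-- The inverse braiding `ψ⁻¹_{N,M}(n ⊗ m) = m₍₀₎ ◁ S⁻¹(n₍₁₎) ⊗ S⁻¹(m₍₋₁₎) ▷ n₍₀₎`,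
where `Si` is the (given) inverse of the antipode. -/
def braidInv (Si : H →ₗ[K] H) {M N : Type}
    [AddCommGroup M] [Module K M] [AddCommGroup N] [Module K N]
    (lcoactM : M →ₗ[K] H ⊗[K] M) (ractM : M ⊗[K] H →ₗ[K] M)
    (lactN : H ⊗[K] N →ₗ[K] N) (rcoactN : N →ₗ[K] N ⊗[K] H) :
    N ⊗[K] M →ₗ[K] M ⊗[K] N :=
  TensorProduct.map ractM lactN
    ∘ₗ (TensorProduct.comm K (H ⊗[K] N) (M ⊗[K] H)).toLinearMap
    ∘ₗ (tensorTensorTensorComm K H M N H).toLinearMap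
    ∘ₗ (TensorProduct.comm K (N ⊗[K] H) (H ⊗[K] M)).toLinearMap
    ∘ₗ TensorProduct.map (Si.lTensor N ∘ₗ rcoactN) (Si.rTensor M ∘ₗ lcoactM)

/-! Structure maps of `H₁, H₂, H₃, H₄` from Example 2.4. -/

/-- `h ▷ (k ⊗ l) = hk ⊗ l`. -/
def lactA : H ⊗[K] (H ⊗[K] H) →ₗ[K] H ⊗[K] H :=
  (mu K H).rTensor H ∘ₗ (TensorProduct.assoc K H H H).symm.toLinearMap

/-- `l ⊗ h ↦ S(h₁) l h₂`. -/
def adR : H ⊗[K] H →ₗ[K] H :=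
  mu K H ∘ₗ (mu K H ∘ₗ (sa K H).rTensor H ∘ₗ (TensorProduct.comm K H H).toLinearMap).rTensor H
    ∘ₗ (TensorProduct.assoc K H H H).symm.toLinearMap ∘ₗ (cm K H).lTensor H

/-- `(k ⊗ l) ◁ h = k ⊗ S(h₁) l h₂`. -/
def ractA : (H ⊗[K] H) ⊗[K] H →ₗ[K] H ⊗[K] H :=
  (adR K H).lTensor H ∘ₗ (TensorProduct.assoc K H H H).toLinearMap

/-- `k ↦ k₁ S(k₃) ⊗ k₂`. -/
def c1 : H →ₗ[K] H ⊗[K] H :=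
  (mu K H).rTensor H ∘ₗ (TensorProduct.assoc K H H H).symm.toLinearMap
    ∘ₗ ((sa K H).rTensor H ∘ₗ (TensorProduct.comm K H H).toLinearMap).lTensor H
    ∘ₗ (cm K H).lTensor H ∘ₗ cm K H

/-- `ρˡ(k ⊗ l) = k₁ S(k₃) ⊗ (k₂ ⊗ l)`. -/
def lcoactA : H ⊗[K] H →ₗ[K] H ⊗[K] (H ⊗[K] H) :=
  (TensorProduct.assoc K H H H).toLinearMap ∘ₗ (c1 K H).rTensor H

/-- `ρʳ(k ⊗ l) = (k ⊗ l₁) ⊗ l₂`. -/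
def rcoactA : H ⊗[K] H →ₗ[K] (H ⊗[K] H) ⊗[K] H :=
  (TensorProduct.assoc K H H H).symm.toLinearMap ∘ₗ (cm K H).lTensor H

/-- `h ⊗ x ↦ h₁ x S(h₂)`. -/
def ad : H ⊗[K] H →ₗ[K] H :=
  mu K H ∘ₗ (mu K H ∘ₗ (sa K H).lTensor H ∘ₗ (TensorProduct.comm K H H).toLinearMap).lTensor H
    ∘ₗ (TensorProduct.assoc K H H H).toLinearMap ∘ₗ (cm K H).rTensor H

/-- `h ▷ (k ⊗ l) = h₁ k S(h₂) ⊗ l`. -/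
def lactB : H ⊗[K] (H ⊗[K] H) →ₗ[K] H ⊗[K] H :=
  (ad K H).rTensor H ∘ₗ (TensorProduct.assoc K H H H).symm.toLinearMap

/-- `(k ⊗ l) ◁ h = k ⊗ l h`. -/
def ractB : (H ⊗[K] H) ⊗[K] H →ₗ[K] H ⊗[K] H :=
  (mu K H).lTensor H ∘ₗ (TensorProduct.assoc K H H H).toLinearMap

/-- `ρˡ(k ⊗ l) = k₁ ⊗ (k₂ ⊗ l)`. -/
def lcoactB : H ⊗[K] H →ₗ[K] H ⊗[K] (H ⊗[K] H) :=
  (TensorProduct.assoc K H H H).toLinearMap ∘ₗ (cm K H).rTensor H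

/-- `l ↦ l₂ ⊗ S(l₁) l₃`. -/
def c2 : H →ₗ[K] H ⊗[K] H :=
  (mu K H).lTensor H ∘ₗ ((sa K H).rTensor H).lTensor H ∘ₗ (TensorProduct.assoc K H H H).toLinearMap
    ∘ₗ (TensorProduct.comm K H H).toLinearMap.rTensor H ∘ₗ (cm K H).rTensor H ∘ₗ cm K H

/-- `ρʳ(k ⊗ l) = (k ⊗ l₂) ⊗ S(l₁) l₃`. -/
def rcoactB : H ⊗[K] H →ₗ[K] (H ⊗[K] H) ⊗[K] H :=
  (TensorProduct.assoc K H H H).symm.toLinearMap ∘ₗ (c2 K H).lTensor H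

/-- The `u`-map `m ↦ m₍₋₁₎ ▷ (m₍₀₎₍₀₎ ◁ m₍₀₎₍₁₎)`; the `u`-condition says it is the identity. -/
def uMap {M : Type} [AddCommGroup M] [Module K M]
    (lact : H ⊗[K] M →ₗ[K] M) (ract : M ⊗[K] H →ₗ[K] M)
    (lcoact : M →ₗ[K] H ⊗[K] M) (rcoact : M →ₗ[K] M ⊗[K] H) : M →ₗ[K] M :=
  lact ∘ₗ ract.lTensor H ∘ₗ rcoact.lTensor H ∘ₗ lcoact

/-! Quasitriangular structures. -/

/-- `a ⊗ b ↦ (a ⊗ 1) ⊗ b`. -/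
def i13 : H ⊗[K] H →ₗ[K] (H ⊗[K] H) ⊗[K] H :=
  (Algebra.TensorProduct.includeLeft (R := K) (A := H) (B := H) (S := K)).toLinearMap.rTensor H

/-- `a ⊗ b ↦ (1 ⊗ a) ⊗ b`. -/
def i23 : H ⊗[K] H →ₗ[K] (H ⊗[K] H) ⊗[K] H :=
  (Algebra.TensorProduct.includeRight (R := K) (A := H) (B := H)).toLinearMap.rTensor H

/-- `a ⊗ b ↦ a ⊗ (1 ⊗ b)`. -/
def j13 : H ⊗[K] H →ₗ[K] H ⊗[K] (H ⊗[K] H) :=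
  (Algebra.TensorProduct.includeRight (R := K) (A := H) (B := H)).toLinearMap.lTensor H

/-- `a ⊗ b ↦ a ⊗ (b ⊗ 1)`. -/
def j12 : H ⊗[K] H →ₗ[K] H ⊗[K] (H ⊗[K] H) :=
  (Algebra.TensorProduct.includeLeft (R := K) (A := H) (B := H) (S := K)).toLinearMap.lTensor H

/-- Quasitriangular Hopf algebra (Definition 2.2, (QT1)–(QT4)). -/
structure IsQT (R : H ⊗[K] H) : Prop where
  unit : IsUnit R
  qt1 : (cm K H).rTensor H R = i13 K H R * i23 K H R
  qt2 : (cm K H).lTensor H R = j13 K H R * j12 K H R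
  qt3 : ∀ h : H, (TensorProduct.comm K H H) (cm K H h) * R = R * cm K H h
  qt4l : (TensorProduct.lid K H) ((cu K H).rTensor H R) = 1
  qt4r : (TensorProduct.rid K H) ((cu K H).lTensor H R) = 1

/-- Triangular Hopf algebra: quasitriangular with `R⁻¹ = τ(R)`. -/
structure IsTriangular (R : H ⊗[K] H) extends IsQT K H R : Prop where
  tri : R * (TensorProduct.comm K H H) R = 1 ∧ (TensorProduct.comm K H H) R * R = 1

/-- `ρˡ(m) = R² ⊗ R¹ ▷ m`. -/
def lcoactR {M : Type} [AddCommGroup M] [Module K M]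
    (lact : H ⊗[K] M →ₗ[K] M) (R : H ⊗[K] H) : M →ₗ[K] H ⊗[K] M :=
  lact.lTensor H ∘ₗ (TensorProduct.assoc K H H M).toLinearMap
    ∘ₗ TensorProduct.mk K (H ⊗[K] H) M ((TensorProduct.comm K H H) R)

/-- `ρʳ(m) = m ◁ R¹ ⊗ R²`. -/
def rcoactR {M : Type} [AddCommGroup M] [Module K M]
    (ract : M ⊗[K] H →ₗ[K] M) (R : H ⊗[K] H) : M →ₗ[K] M ⊗[K] H :=
  ract.rTensor H ∘ₗ (TensorProduct.assoc K M H H).symm.toLinearMap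
    ∘ₗ (TensorProduct.mk K M (H ⊗[K] H)).flip R

/-! Coquasitriangular structures. -/

/-- The comultiplication of the tensor-product coalgebra `H ⊗ H`. -/
def cm2 : H ⊗[K] H →ₗ[K] (H ⊗[K] H) ⊗[K] (H ⊗[K] H) :=
  (tensorTensorTensorComm K H H H H).toLinearMap ∘ₗ TensorProduct.map (cm K H) (cm K H)

/-- Convolution product on linear forms on `H ⊗ H`. -/
def conv (f g : H ⊗[K] H →ₗ[K] K) : H ⊗[K] H →ₗ[K] K :=
  LinearMap.mul' K K ∘ₗ TensorProduct.map f g ∘ₗ cm2 K H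

/-- `g ⊗ h ↦ ε(g) ε(h)`, the convolution unit. -/
def epsBoth : H ⊗[K] H →ₗ[K] K :=
  LinearMap.mul' K K ∘ₗ TensorProduct.map (cu K H) (cu K H)

/-- Coquasitriangular Hopf algebra (Definition 2.3, (CQT1)–(CQT4)). -/
structure IsCQT (z : H ⊗[K] H →ₗ[K] K) : Prop where
  inv : ∃ z' : H ⊗[K] H →ₗ[K] K, conv K H z z' = epsBoth K H ∧ conv K H z' z = epsBoth K H
  cqt1 : z ∘ₗ (mu K H).lTensor H
      = LinearMap.mul' K K ∘ₗ TensorProduct.map z z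
        ∘ₗ (tensorTensorTensorComm K H H H H).toLinearMap ∘ₗ (cm K H).rTensor (H ⊗[K] H)
  cqt2 : z ∘ₗ (mu K H).rTensor H
      = LinearMap.mul' K K ∘ₗ TensorProduct.map z z
        ∘ₗ (tensorTensorTensorComm K H H H H).toLinearMap
        ∘ₗ (TensorProduct.comm K H H).toLinearMap.lTensor (H ⊗[K] H)
        ∘ₗ (cm K H).lTensor (H ⊗[K] H)
  cqt3 : (TensorProduct.lid K H).toLinearMap
        ∘ₗ TensorProduct.map z (mu K H ∘ₗ (TensorProduct.comm K H H).toLinearMap) ∘ₗ cm2 K H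
      = (TensorProduct.rid K H).toLinearMap ∘ₗ TensorProduct.map (mu K H) z ∘ₗ cm2 K H
  cqt4 : ∀ h : H, z (h ⊗ₜ 1) = cu K H h ∧ z ((1 : H) ⊗ₜ h) = cu K H h

/-- Cotriangular Hopf algebra: coquasitriangular with
`ζ(h₁,g₁) ζ(g₂,h₂) = ε(h) ε(g)`. -/
structure IsCotriangular (z : H ⊗[K] H →ₗ[K] K) extends IsCQT K H z : Prop where
  cot : conv K H z (z ∘ₗ (TensorProduct.comm K H H).toLinearMap) = epsBoth K H

/-- `h ▷ m = ζ(h, m₍₋₁₎) m₍₀₎`. -/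
def lactZ {M : Type} [AddCommGroup M] [Module K M]
    (lcoact : M →ₗ[K] H ⊗[K] M) (z : H ⊗[K] H →ₗ[K] K) : H ⊗[K] M →ₗ[K] M :=
  (TensorProduct.lid K M).toLinearMap ∘ₗ z.rTensor M
    ∘ₗ (TensorProduct.assoc K H H M).symm.toLinearMap ∘ₗ lcoact.lTensor H

/-- `m ◁ h = m₍₀₎ ζ(h, m₍₁₎)`. -/
def ractZ {M : Type} [AddCommGroup M] [Module K M]
    (rcoact : M →ₗ[K] M ⊗[K] H) (z : H ⊗[K] H →ₗ[K] K) : M ⊗[K] H →ₗ[K] M :=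
  (TensorProduct.rid K M).toLinearMap ∘ₗ z.lTensor M
    ∘ₗ (TensorProduct.comm K H H).toLinearMap.lTensor M
    ∘ₗ (TensorProduct.assoc K M H H).toLinearMap ∘ₗ rcoact.rTensor H

end YDL
section Statement8Aux
open Coalgebra
namespace Statement8Aux
variable {K : Type} [Field K] {H : Type} [Ring H] [HopfAlgebra K H]

/-- Convolution product on `Hom(C, H)`. -/
noncomputable def conv {C : Type} [AddCommGroup C] [Module K C] [Coalgebra K C]
    (f g : C →ₗ[K] H) : C →ₗ[K] H :=
  LinearMap.mul' K H ∘ₗ TensorProduct.map f g ∘ₗ Coalgebra.comul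

/-- Convolution unit `η ∘ ε`. -/
noncomputable def cunit {C : Type} [AddCommGroup C] [Module K C] [Coalgebra K C] :
    C →ₗ[K] H :=
  Algebra.linearMap K H ∘ₗ Coalgebra.counit

variable (K H) in
noncomputable def S : H →ₗ[K] H := HopfAlgebra.antipode (R := K)

lemma S_apply (a : H) : S K H a = HopfAlgebra.antipode (R := K) a := rfl

section Generic
variable {C : Type} [AddCommGroup C] [Module K C] [Coalgebra K C]

lemma conv_repr {ι : Type*} (f g : C →ₗ[K] H) (a : C) (r : Repr K a ι) :
    conv f g a = ∑ i ∈ r.index, f (r.left i) * g (r.right i) := by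
  simp [conv, ← r.eq, map_sum]

lemma conv_assoc (f g h : C →ₗ[K] H) : conv (conv f g) h = conv f (conv g h) := by
  apply LinearMap.ext; intro a
  set r : Repr K a (C × C) := Repr.arbitrary K a with hr
  set a₁ : ∀ i, Repr K (r.left i) (C × C) := fun i => Repr.arbitrary K (r.left i) with ha1
  set a₂ : ∀ i, Repr K (r.right i) (C × C) := fun i => Repr.arbitrary K (r.right i) with ha2
  have key := congrArg (LinearMap.mul' K H ∘ₗ
    TensorProduct.map f (LinearMap.mul' K H ∘ₗ TensorProduct.map g h)) (sum_tmul_tmul_eq r a₁ a₂)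
  simp only [map_sum, LinearMap.comp_apply, TensorProduct.map_tmul, LinearMap.mul'_apply] at key
  rw [conv_repr _ _ a r, conv_repr _ _ a r]
  calc ∑ i ∈ r.index, conv f g (r.left i) * h (r.right i)
      = ∑ i ∈ r.index, ∑ j ∈ (a₁ i).index,
          f ((a₁ i).left j) * (g ((a₁ i).right j) * h (r.right i)) := by
        refine Finset.sum_congr rfl fun i _ => ?_
        rw [conv_repr _ _ _ (a₁ i), Finset.sum_mul]
        simp [mul_assoc]
    _ = ∑ i ∈ r.index, ∑ j ∈ (a₂ i).index,
          f (r.left i) * (g ((a₂ i).left j) * h ((a₂ i).right j)) := key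
    _ = ∑ i ∈ r.index, f (r.left i) * conv g h (r.right i) := by
        refine Finset.sum_congr rfl fun i _ => ?_
        rw [conv_repr _ _ _ (a₂ i), Finset.mul_sum]

lemma cunit_conv (f : C →ₗ[K] H) : conv cunit f = f := by
  apply LinearMap.ext; intro a
  set r : Repr K a (C × C) := Repr.arbitrary K a with hr
  have key := congrArg (TensorProduct.lid K H)
    (sum_counit_tmul_map_eq (R := K) f a (repr := r))
  simp only [map_sum, TensorProduct.lid_tmul, one_smul] at key
  rw [conv_repr _ _ a r, ← key]
  refine Finset.sum_congr rfl fun i _ => ?_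
  simp [cunit, Algebra.smul_def]

lemma conv_cunit (f : C →ₗ[K] H) : conv f cunit = f := by
  apply LinearMap.ext; intro a
  set r : Repr K a (C × C) := Repr.arbitrary K a with hr
  have key := congrArg (TensorProduct.rid K H)
    (sum_map_tmul_counit_eq (R := K) f a (repr := r))
  simp only [map_sum, TensorProduct.rid_tmul, one_smul] at key
  rw [conv_repr _ _ a r, ← key]
  refine Finset.sum_congr rfl fun i _ => ?_
  simp [cunit, Algebra.smul_def, ← Algebra.commutes]

end Generic

lemma conv_S_id : conv (S K H) LinearMap.id = cunit := by
  rw [conv, cunit]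
  rw [show TensorProduct.map (S K H) (LinearMap.id (M := H))
      = LinearMap.rTensor H (S K H) from rfl]
  exact HopfAlgebra.mul_antipode_rTensor_comul

lemma S_one : S K H 1 = 1 := by
  have := HopfAlgebra.mul_antipode_rTensor_comul_apply (R := K) (1 : H)
  rw [Bialgebra.comul_one, Algebra.TensorProduct.one_def] at this
  simpa [S] using this

/-- A representation of the comultiplication of a product. -/
noncomputable def Repr.mul {ι κ : Type*} {a b : H} (ra : Repr K a ι) (rb : Repr K b κ) :
    Repr K (a * b) (ι × κ) where
  index := ra.index ×ˢ rb.index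
  left := fun p => ra.left p.1 * rb.left p.2
  right := fun p => ra.right p.1 * rb.right p.2
  eq := by
    rw [Finset.sum_product]
    rw [Bialgebra.comul_mul, ← ra.eq, ← rb.eq, Finset.sum_mul_sum]
    simp [Algebra.TensorProduct.tmul_mul_tmul]

open TensorProduct in
variable (K H) in
noncomputable def Fm : H ⊗[K] H →ₗ[K] H := LinearMap.mul' K H

open TensorProduct in
variable (K H) in
noncomputable def Gm : H ⊗[K] H →ₗ[K] H :=
  LinearMap.mul' K H ∘ₗ TensorProduct.map (S K H) (S K H)
    ∘ₗ (TensorProduct.comm K H H).toLinearMap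

open TensorProduct in
variable (K H) in
noncomputable def Pm : H ⊗[K] H →ₗ[K] H := S K H ∘ₗ LinearMap.mul' K H

open TensorProduct in
lemma cunit_tmul (a b : H) :
    (cunit : H ⊗[K] H →ₗ[K] H) (a ⊗ₜ b)
      = algebraMap K H (Coalgebra.counit a * Coalgebra.counit b) := by
  simp [cunit]
  exact Algebra.commutes _ _

open TensorProduct in
lemma conv_tmul {ι κ : Type*} (f g : H ⊗[K] H →ₗ[K] H) (a b : H) (ra : Repr K a ι)
    (rb : Repr K b κ) :
    conv f g (a ⊗ₜ b) = ∑ i ∈ ra.index, ∑ j ∈ rb.index,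
      f (ra.left i ⊗ₜ rb.left j) * g (ra.right i ⊗ₜ rb.right j) := by
  have hcm : Coalgebra.comul (R := K) (a ⊗ₜ[K] b)
      = tensorTensorTensorComm K H H H H
          (Coalgebra.comul (R := K) a ⊗ₜ Coalgebra.comul (R := K) b) := rfl
  rw [conv, LinearMap.comp_apply, LinearMap.comp_apply, hcm, ← ra.eq, ← rb.eq]
  rw [sum_tmul]
  simp only [tmul_sum, map_sum, tensorTensorTensorComm_tmul, TensorProduct.map_tmul,
    LinearMap.mul'_apply]

open TensorProduct in
lemma conv_F_G : conv (Fm K H) (Gm K H) = cunit := by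
  apply TensorProduct.ext'; intro a b
  set ra := Repr.arbitrary K a
  set rb := Repr.arbitrary K b
  rw [conv_tmul _ _ a b ra rb, cunit_tmul]
  have step1 : ∀ i ∈ ra.index, ∑ j ∈ rb.index,
      Fm K H (ra.left i ⊗ₜ rb.left j) * Gm K H (ra.right i ⊗ₜ rb.right j)
      = Coalgebra.counit (R := K) b • (ra.left i * S K H (ra.right i)) := by
    intro i _
    calc ∑ j ∈ rb.index,
          Fm K H (ra.left i ⊗ₜ rb.left j) * Gm K H (ra.right i ⊗ₜ rb.right j)
        = ra.left i * ((∑ j ∈ rb.index, rb.left j * S K H (rb.right j)) * S K H (ra.right i)) := by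
          rw [Finset.sum_mul, Finset.mul_sum]
          refine Finset.sum_congr rfl fun j _ => ?_
          simp only [Fm, Gm, LinearMap.comp_apply, LinearMap.mul'_apply, comm_tmul,
            LinearEquiv.coe_coe, TensorProduct.map_tmul, mul_assoc]
      _ = Coalgebra.counit (R := K) b • (ra.left i * S K H (ra.right i)) := by
          simp only [S_apply, HopfAlgebra.sum_mul_antipode_eq_algebraMap_counit rb]
          rw [← Algebra.smul_def, mul_smul_comm]
  rw [Finset.sum_congr rfl step1, ← Finset.smul_sum]
  simp only [S_apply, HopfAlgebra.sum_mul_antipode_eq_algebraMap_counit ra]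
  rw [Algebra.smul_def, ← map_mul, mul_comm]

open TensorProduct in
lemma conv_P_F : conv (Pm K H) (Fm K H) = cunit := by
  apply TensorProduct.ext'; intro a b
  set ra := Repr.arbitrary K a
  set rb := Repr.arbitrary K b
  rw [conv_tmul _ _ a b ra rb, cunit_tmul]
  have key := HopfAlgebra.sum_antipode_mul_eq_algebraMap_counit (R := K) (Repr.mul ra rb)
  simp only [Repr.mul] at key
  rw [Finset.sum_product] at key
  rw [Bialgebra.counit_mul] at key
  rw [← key]
  refine Finset.sum_congr rfl fun i _ => Finset.sum_congr rfl fun j _ => ?_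
  simp [Fm, Pm, S_apply]

lemma P_eq_G : Pm K H = Gm K H := by
  calc Pm K H = conv (Pm K H) cunit := (conv_cunit _).symm
    _ = conv (Pm K H) (conv (Fm K H) (Gm K H)) := by rw [conv_F_G]
    _ = conv (conv (Pm K H) (Fm K H)) (Gm K H) := (conv_assoc _ _ _).symm
    _ = conv cunit (Gm K H) := by rw [conv_P_F]
    _ = Gm K H := cunit_conv _

open TensorProduct in
lemma S_anti (x y : H) : S K H (x * y) = S K H y * S K H x := by
  have := congrArg (fun f : H ⊗[K] H →ₗ[K] H => f (x ⊗ₜ y)) P_eq_G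
  simpa [Pm, Gm] using this

variable (K H) in
noncomputable def gmap : H →ₗ[K] H :=
  LinearMap.mul' K H ∘ₗ LinearMap.lTensor H (S K H)
    ∘ₗ (TensorProduct.comm K H H).toLinearMap ∘ₗ Coalgebra.comul

lemma gmap_repr {ι : Type*} (a : H) (r : Repr K a ι) :
    gmap K H a = ∑ i ∈ r.index, r.right i * S K H (r.left i) := by
  simp [gmap, ← r.eq, map_sum]

lemma main (hyp : conv LinearMap.id (gmap K H) = LinearMap.id) :
    gmap K H = cunit ∧ (S K H) ∘ₗ (S K H) = LinearMap.id := by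
  have part1 : gmap K H = cunit := by
    calc gmap K H = conv cunit (gmap K H) := (cunit_conv _).symm
      _ = conv (conv (S K H) LinearMap.id) (gmap K H) := by rw [conv_S_id]
      _ = conv (S K H) (conv LinearMap.id (gmap K H)) := conv_assoc _ _ _
      _ = conv (S K H) LinearMap.id := by rw [hyp]
      _ = cunit := conv_S_id
  refine ⟨part1, ?_⟩
  have SS_S : conv ((S K H) ∘ₗ (S K H)) (S K H) = cunit := by
    apply LinearMap.ext; intro a
    set r : Repr K a (H × H) := Repr.arbitrary K a
    rw [conv_repr _ _ a r]
    calc ∑ i ∈ r.index, ((S K H) ∘ₗ (S K H)) (r.left i) * S K H (r.right i)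
        = ∑ i ∈ r.index, S K H (r.right i * S K H (r.left i)) := by
          refine Finset.sum_congr rfl fun i _ => ?_
          rw [S_anti]; rfl
      _ = S K H (∑ i ∈ r.index, r.right i * S K H (r.left i)) := (map_sum _ _ _).symm
      _ = S K H (gmap K H a) := by rw [gmap_repr a r]
      _ = S K H ((cunit : H →ₗ[K] H) a) := by rw [part1]
      _ = (cunit : H →ₗ[K] H) a := by
          simp [cunit, Algebra.algebraMap_eq_smul_one, map_smul, S_one]
  calc (S K H) ∘ₗ (S K H) = conv ((S K H) ∘ₗ (S K H)) cunit := (conv_cunit _).symm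
    _ = conv ((S K H) ∘ₗ (S K H)) (conv (S K H) LinearMap.id) := by rw [conv_S_id]
    _ = conv (conv ((S K H) ∘ₗ (S K H)) (S K H)) LinearMap.id := (conv_assoc _ _ _).symm
    _ = conv cunit LinearMap.id := by rw [SS_S]
    _ = LinearMap.id := cunit_conv _

end Statement8Aux
end Statement8Aux

/-- if `k₁ k₃ S(k₂) = k` for all `k`, then `k₂ S(k₁) = ε(k) 1`
for all `k`, and hence `S² = id`. -/
theorem statement8 (K : Type) [Field K] (H : Type) [Ring H] [HopfAlgebra K H]
    (hyp : YDL.mu K H ∘ₗ (YDL.mu K H).lTensor H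
        ∘ₗ ((YDL.sa K H).lTensor H).lTensor H
        ∘ₗ (TensorProduct.comm K H H).toLinearMap.lTensor H
        ∘ₗ (YDL.cm K H).lTensor H ∘ₗ YDL.cm K H = LinearMap.id) :
    (YDL.mu K H ∘ₗ (YDL.sa K H).lTensor H ∘ₗ (TensorProduct.comm K H H).toLinearMap
        ∘ₗ YDL.cm K H = YDL.eta K H ∘ₗ YDL.cu K H)
    ∧ YDL.sa K H ∘ₗ YDL.sa K H = LinearMap.id := by
  have hyp' : Statement8Aux.conv LinearMap.id (Statement8Aux.gmap K H) = LinearMap.id := by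
    rw [Statement8Aux.conv]
    rw [show TensorProduct.map (LinearMap.id (M := H)) (Statement8Aux.gmap K H)
        = LinearMap.lTensor H (Statement8Aux.gmap K H) from rfl]
    rw [Statement8Aux.gmap]
    simp only [LinearMap.lTensor_comp, LinearMap.comp_assoc]
    exact hyp
  obtain ⟨h1, h2⟩ := Statement8Aux.main hyp'
  exact ⟨h1, h2⟩
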